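/- For every irrational x, the backward continued fraction convergents r_n(x)/s_n(x) converge to x, where r_{-1}=1, r_0=b_0(x), r_n = b_n r_{n−1} − r_{n−2}, and s_{-1}=0, s_0=1, s_n = b_n s_{n−1} − s_{n−2}, with b_n = b_n(x) the backward continued fraction digits of x. -/

import Mathlib

/-- The Renyi backward continued fraction map. -/
noncomputable def renyi (y : ℝ) : ℝ := Int.fract (1 / (1 - y))

/-- The (n+1)-st backward continued fraction digit of the fractional part of x. -/
noncomputable def bDigit (x : ℝ) (n : ℕ) : ℤ := ⌊1 / (1 - renyi^[n] (Int.fract x))⌋ + 1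

/-- BCF convergent denominators. -/
noncomputable def bcfS (x : ℝ) : ℕ → ℤ
  | 0 => 1
  | 1 => bDigit x 0
  | n + 2 => bDigit x (n + 1) * bcfS x (n + 1) - bcfS x n

/-- BCF convergent numerators. -/
noncomputable def bcfR (x : ℝ) : ℕ → ℤ
  | 0 => ⌊x⌋ + 1
  | 1 => bDigit x 0 * (⌊x⌋ + 1) - 1
  | n + 2 => bDigit x (n + 1) * bcfR x (n + 1) - bcfR x n

namespace BCFAux

noncomputable def Y (x : ℝ) (n : ℕ) : ℝ := renyi^[n] (Int.fract x)

noncomputable def Z (x : ℝ) (n : ℕ) : ℝ := 1 - Y x n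

lemma irrational_fract {y : ℝ} (h : Irrational y) : Irrational (Int.fract y) :=
  h.sub_intCast ⌊y⌋

lemma irrational_Y (x : ℝ) (hx : Irrational x) (n : ℕ) : Irrational (Y x n) := by
  induction n with
  | zero => exact irrational_fract hx
  | succ n ih =>
    have h1 : Irrational (1 - Y x n) := by simpa using ih.intCast_sub 1
    have h2 : Irrational (1 / (1 - Y x n)) := by
      simpa [one_div] using h1.inv
    have : Y x (n+1) = Int.fract (1 / (1 - Y x n)) := by
      simp [Y, Function.iterate_succ_apply', renyi]
    rw [this]
    exact irrational_fract h2

lemma Y_mem (x : ℝ) (hx : Irrational x) (n : ℕ) : 0 < Y x n ∧ Y x n < 1 := by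
  have hirr := irrational_Y x hx n
  have hform : ∃ t : ℝ, Y x n = Int.fract t := by
    cases n with
    | zero => exact ⟨x, rfl⟩
    | succ m => exact ⟨1 / (1 - Y x m), by simp [Y, Function.iterate_succ_apply', renyi]⟩
  obtain ⟨t, ht⟩ := hform
  constructor
  · rcases lt_or_eq_of_le (ht ▸ Int.fract_nonneg t) with h | h
    · exact h
    · exact absurd h.symm (by simpa using hirr.ne_int 0)
  · exact ht ▸ Int.fract_lt_one t

lemma Z_pos (x : ℝ) (hx : Irrational x) (n : ℕ) : 0 < Z x n :=
  by simpa [Z] using (Y_mem x hx n).2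

lemma Z_lt_one (x : ℝ) (hx : Irrational x) (n : ℕ) : Z x n < 1 :=
  by simpa [Z] using (Y_mem x hx n).1

/-- Key digit identity: b_{n+1} - z_{n+1} = 1/z_n -/
lemma digit_key (x : ℝ) (n : ℕ) :
    (bDigit x n : ℝ) - Z x (n + 1) = 1 / Z x n := by
  have hY : Y x (n+1) = Int.fract (1 / (1 - Y x n)) := by
    simp [Y, Function.iterate_succ_apply', renyi]
  have hfl : (⌊1 / (1 - Y x n)⌋ : ℝ) = 1 / (1 - Y x n) - Int.fract (1 / (1 - Y x n)) := by
    rw [Int.self_sub_fract]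
  unfold bDigit Z
  rw [show renyi^[n] (Int.fract x) = Y x n from rfl]
  push_cast
  rw [hfl, hY]
  ring

lemma digit_key' (x : ℝ) (hx : Irrational x) (n : ℕ) :
    Z x n * ((bDigit x n : ℝ) - Z x (n + 1)) = 1 := by
  rw [digit_key]
  field_simp [(Z_pos x hx n).ne']

lemma digit_ge_two (x : ℝ) (hx : Irrational x) (n : ℕ) : 2 ≤ bDigit x n := by
  unfold bDigit
  have hz := Z_pos x hx n
  simp only [Z] at hz
  have hy := (Y_mem x hx n).1
  have h1 : (1 : ℝ) ≤ 1 / (1 - Y x n) := by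
    rw [le_div_iff₀ hz]; linarith
  have : (1 : ℤ) ≤ ⌊1 / (1 - renyi^[n] (Int.fract x))⌋ := by
    rw [Int.le_floor]
    exact_mod_cast h1
  omega

lemma bcfS_growth (x : ℝ) (hx : Irrational x) :
    ∀ n : ℕ, (n : ℤ) + 1 ≤ bcfS x n ∧ bcfS x n + 1 ≤ bcfS x (n + 1) := by
  intro n
  induction n with
  | zero =>
    refine ⟨by simp [bcfS], ?_⟩
    have := digit_ge_two x hx 0
    simp [bcfS]; omega
  | succ n ih =>
    obtain ⟨h1, h2⟩ := ih
    have hb := digit_ge_two x hx (n + 1)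
    have hrec : bcfS x (n + 2) = bDigit x (n + 1) * bcfS x (n + 1) - bcfS x n := rfl
    constructor
    · push_cast; omega
    · rw [hrec]; nlinarith

lemma det (x : ℝ) : ∀ n : ℕ,
    bcfR x (n + 1) * bcfS x n - bcfR x n * bcfS x (n + 1) = -1 := by
  intro n
  induction n with
  | zero => simp [bcfR, bcfS]; ring
  | succ n ih =>
    have hR : bcfR x (n + 2) = bDigit x (n + 1) * bcfR x (n + 1) - bcfR x n := rfl
    have hS : bcfS x (n + 2) = bDigit x (n + 1) * bcfS x (n + 1) - bcfS x n := rfl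
    rw [hR, hS]; linarith [ih]

lemma x_eq (x : ℝ) : x = (⌊x⌋ : ℝ) + 1 - Z x 0 := by
  have h : Z x 0 = 1 - Int.fract x := rfl
  rw [h, Int.fract]
  ring

lemma invariant (x : ℝ) (hx : Irrational x) : ∀ n : ℕ,
    x * ((bcfS x (n + 1) : ℝ) - Z x (n + 1) * (bcfS x n : ℝ)) =
      (bcfR x (n + 1) : ℝ) - Z x (n + 1) * (bcfR x n : ℝ) := by
  intro n
  induction n with
  | zero =>
    have hk : Z x 0 * ((bDigit x 0 : ℝ) - Z x 1) = 1 := digit_key' x hx 0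
    have hxe := x_eq x
    show x * ((bcfS x 1 : ℝ) - Z x 1 * (bcfS x 0 : ℝ)) =
      (bcfR x 1 : ℝ) - Z x 1 * (bcfR x 0 : ℝ)
    rw [show bcfS x 1 = bDigit x 0 from rfl, show bcfS x 0 = 1 from rfl,
      show bcfR x 1 = bDigit x 0 * (⌊x⌋ + 1) - 1 from rfl,
      show bcfR x 0 = ⌊x⌋ + 1 from rfl]
    push_cast
    linear_combination ((bDigit x 0 : ℝ) - Z x 1) * hxe - hk
  | succ n ih =>
    have hk : Z x (n + 1) * ((bDigit x (n + 1) : ℝ) - Z x (n + 2)) = 1 :=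
      digit_key' x hx (n + 1)
    have hR : ((bcfR x (n + 2) : ℤ) : ℝ) =
        (bDigit x (n + 1) : ℝ) * (bcfR x (n + 1) : ℝ) - (bcfR x n : ℝ) := by
      rw [show bcfR x (n + 2) = bDigit x (n + 1) * bcfR x (n + 1) - bcfR x n from rfl]
      push_cast; ring
    have hS : ((bcfS x (n + 2) : ℤ) : ℝ) =
        (bDigit x (n + 1) : ℝ) * (bcfS x (n + 1) : ℝ) - (bcfS x n : ℝ) := by
      rw [show bcfS x (n + 2) = bDigit x (n + 1) * bcfS x (n + 1) - bcfS x n from rfl]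
      push_cast; ring
    show x * ((bcfS x (n + 2) : ℝ) - Z x (n + 2) * (bcfS x (n + 1) : ℝ)) =
      (bcfR x (n + 2) : ℝ) - Z x (n + 2) * (bcfR x (n + 1) : ℝ)
    rw [hR, hS]
    linear_combination ((bDigit x (n + 1) : ℝ) - Z x (n + 2)) * ih +
      (x * (bcfS x n : ℝ) - (bcfR x n : ℝ)) * hk

lemma error_bound (x : ℝ) (hx : Irrational x) (n : ℕ) :
    |x - (bcfR x (n + 1) : ℝ) / (bcfS x (n + 1) : ℝ)| ≤ 1 / ((n : ℝ) + 2) := by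
  set S : ℝ := (bcfS x (n + 1) : ℝ) with hSdef
  set S' : ℝ := (bcfS x n : ℝ) with hS'def
  set R : ℝ := (bcfR x (n + 1) : ℝ) with hRdef
  set R' : ℝ := (bcfR x n : ℝ) with hR'def
  set z : ℝ := Z x (n + 1) with hzdef
  have hz0 : 0 < z := Z_pos x hx (n + 1)
  have hz1 : z < 1 := Z_lt_one x hx (n + 1)
  have hgrow := bcfS_growth x hx n
  have hS'pos : (1 : ℝ) ≤ S' := by
    have h1 := hgrow.1
    have : (1 : ℤ) ≤ bcfS x n := by omega
    rw [hS'def]; exact_mod_cast this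
  have hSge : (n : ℝ) + 2 ≤ S := by
    have h := (bcfS_growth x hx (n + 1)).1
    have : (n : ℤ) + 2 ≤ bcfS x (n + 1) := by push_cast at h; omega
    rw [hSdef]; exact_mod_cast this
  have hSS' : S' + 1 ≤ S := by
    have := hgrow.2
    rw [hSdef, hS'def]; exact_mod_cast this
  have hSpos : 0 < S := by linarith
  have hDpos : (1 : ℝ) ≤ S - z * S' := by
    nlinarith [mul_nonneg (by linarith : (0:ℝ) ≤ 1 - z) (by linarith : (0:ℝ) ≤ S')]
  have hdet : R * S' - R' * S = -1 := by
    have := det x n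
    rw [hRdef, hS'def, hR'def, hSdef]
    exact_mod_cast this
  have hinv : x * (S - z * S') = R - z * R' := invariant x hx n
  have hDne : S - z * S' ≠ 0 := by linarith
  have hSne : S ≠ 0 := by linarith
  have key2 : (x - R / S) * ((S - z * S') * S) = -z := by
    have hRS : R / S * S = R := div_mul_cancel₀ R hSne
    calc (x - R / S) * ((S - z * S') * S)
        = (x * (S - z * S')) * S - (R / S * S) * (S - z * S') := by ring
      _ = (R - z * R') * S - R * (S - z * S') := by rw [hinv, hRS]
      _ = z * (R * S' - R' * S) := by ring
      _ = -z := by rw [hdet]; ring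
  have hDS : (0 : ℝ) < (S - z * S') * S := by nlinarith
  have key : x - R / S = -z / ((S - z * S') * S) :=
    (eq_div_iff (by linarith)).mpr key2
  rw [key, abs_div, abs_neg, abs_of_pos hz0, abs_of_pos hDS,
    div_le_div_iff₀ hDS (by positivity)]
  nlinarith [mul_le_mul hz1.le hSge (by linarith) (by norm_num : (0:ℝ) ≤ 1)]

end BCFAux

theorem stmt15 (x : ℝ) (hx : Irrational x) :
    Filter.Tendsto (fun n => (bcfR x n : ℝ) / (bcfS x n : ℝ)) Filter.atTop (nhds x) := by
  rw [tendsto_iff_dist_tendsto_zero]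
  apply squeeze_zero (fun n => dist_nonneg)
    (g := fun n : ℕ => 1 / ((n : ℝ) + 1))
  · intro n
    cases n with
    | zero =>
      have h0 := BCFAux.Y_mem x hx 0
      have hY0 : BCFAux.Y x 0 = x - ⌊x⌋ := rfl
      rw [hY0] at h0
      have hf : (bcfR x 0 : ℝ) / (bcfS x 0 : ℝ) = (⌊x⌋ : ℝ) + 1 := by
        rw [show bcfR x 0 = ⌊x⌋ + 1 from rfl, show bcfS x 0 = 1 from rfl]
        push_cast; ring
      simp only [hf, Real.dist_eq]
      rw [abs_of_pos (by linarith [h0.2])]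
      push_cast
      norm_num
      linarith [h0.1]
    | succ m =>
      have hb := BCFAux.error_bound x hx m
      rw [Real.dist_eq, abs_sub_comm]
      refine le_trans hb (le_of_eq ?_)
      push_cast
      ring
  · exact tendsto_one_div_add_atTop_nhds_zero_nat
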